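/- Assume p_{i+} > 0 for every row i. Let t be an integer with 1 ≤ t < c and S_t(p_{+·}) ≠ 1. If the table is independent, i.e., p i j = p_{i+} · p_{+j} for all i and j, then λ^{K(t)}_{Y|X} = 0. -/
import Mathlib


/-- `Smax t q` : the maximum, over subsets `T` of the index type with `T.card = t`,
of `∑ j ∈ T, q j` (i.e. the sum of the `t` largest entries of `q`). -/
noncomputable def Smax {n : ℕ} (t : ℕ) (q : Fin n → ℝ) : ℝ :=
  sSup ((fun T : Finset (Fin n) => ∑ j ∈ T, q j) '' {T : Finset (Fin n) | T.card = t})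

/-- Row marginals `p_{i+}`. -/
noncomputable def rowMarg {r c : ℕ} (p : Fin r → Fin c → ℝ) : Fin r → ℝ :=
  fun i => ∑ j, p i j

/-- Column marginals `p_{+j}`. -/
noncomputable def colMarg {r c : ℕ} (p : Fin r → Fin c → ℝ) : Fin c → ℝ :=
  fun j => ∑ i, p i j

/-- The measure `λ^{(t)}_{Y|X}` based on multi-categorical proportional reduction in error. -/
noncomputable def lambdaT {r c : ℕ} (t : ℕ) (p : Fin r → Fin c → ℝ) : ℝ :=
  (∑ i, Smax t (p i) - Smax t (colMarg p)) / (1 - Smax t (colMarg p))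

/-- The alternative measure `λ^{K(t)}_{Y|X}`. -/
noncomputable def lambdaKT {r c : ℕ} (t : ℕ) (p : Fin r → Fin c → ℝ) : ℝ :=
  (Real.sqrt (∑ i, (Smax t (p i)) ^ 2 / rowMarg p i) - Smax t (colMarg p)) /
    (1 - Smax t (colMarg p))

open Pointwise

lemma smax_smul {n : ℕ} (t : ℕ) (q : Fin n → ℝ) (a : ℝ) (ha : 0 ≤ a) :
    Smax t (fun j => a * q j) = a * Smax t q := by
  have : ((fun T : Finset (Fin n) => ∑ j ∈ T, a * q j) '' {T : Finset (Fin n) | T.card = t})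
      = a • ((fun T : Finset (Fin n) => ∑ j ∈ T, q j) '' {T : Finset (Fin n) | T.card = t}) := by
    ext x
    simp only [Set.mem_image, Set.mem_smul_set, smul_eq_mul]
    constructor
    · rintro ⟨T, hT, rfl⟩; exact ⟨∑ j ∈ T, q j, ⟨T, hT, rfl⟩, (by rw [Finset.mul_sum])⟩
    · rintro ⟨y, ⟨T, hT, rfl⟩, rfl⟩; exact ⟨T, hT, by rw [Finset.mul_sum]⟩
  rw [Smax, this, Real.sSup_smul_of_nonneg ha, smul_eq_mul, Smax]

lemma smax_nonneg {n : ℕ} (t : ℕ) (htn : t ≤ n) (q : Fin n → ℝ) (hq : ∀ j, 0 ≤ q j) :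
    0 ≤ Smax t q := by
  obtain ⟨T, -, hT⟩ := Finset.exists_subset_card_eq (s := (Finset.univ : Finset (Fin n)))
    (by simpa using htn)
  have hmem : (∑ j ∈ T, q j) ∈
      ((fun T : Finset (Fin n) => ∑ j ∈ T, q j) '' {T : Finset (Fin n) | T.card = t}) :=
    ⟨T, hT, rfl⟩
  have hfin : ((fun T : Finset (Fin n) => ∑ j ∈ T, q j) ''
      {T : Finset (Fin n) | T.card = t}).Finite :=
    (Set.toFinite _).image _
  have := le_csSup hfin.bddAbove hmem
  exact le_trans (Finset.sum_nonneg fun j _ => hq j) this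

/-- independence implies `λ^{K(t)}_{Y|X} = 0`. -/
theorem lambdaKT_eq_zero_of_indep
    (r c : ℕ) (hr : 2 ≤ r) (hc : 2 ≤ c)
    (p : Fin r → Fin c → ℝ) (hp : ∀ i j, 0 ≤ p i j)
    (hsum : ∑ i, ∑ j, p i j = 1)
    (hpos : ∀ i, 0 < rowMarg p i)
    (t : ℕ) (ht1 : 1 ≤ t) (htc : t < c)
    (hS : Smax t (colMarg p) ≠ 1)
    (hind : ∀ i j, p i j = rowMarg p i * colMarg p j) :
    lambdaKT t p = 0 := by
  set S := Smax t (colMarg p) with hSdef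
  have hScol : ∀ j, 0 ≤ colMarg p j := fun j => Finset.sum_nonneg fun i _ => hp i j
  have hSnn : 0 ≤ S := smax_nonneg t (le_of_lt htc) _ hScol
  have hrow : ∀ i, Smax t (p i) = rowMarg p i * S := by
    intro i
    have : p i = fun j => rowMarg p i * colMarg p j := funext fun j => hind i j
    rw [this, smax_smul _ _ _ (hpos i).le]
  have hsum' : ∑ i, rowMarg p i = 1 := by rw [← hsum]; rfl
  have key : ∑ i, (Smax t (p i)) ^ 2 / rowMarg p i = S ^ 2 := by
    have : ∀ i, (Smax t (p i)) ^ 2 / rowMarg p i = rowMarg p i * S ^ 2 := by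
      intro i
      rw [hrow i, mul_pow]
      rw [div_eq_iff (hpos i).ne']
      ring
    rw [Finset.sum_congr rfl fun i _ => this i, ← Finset.sum_mul, hsum', one_mul]
  rw [lambdaKT, key, Real.sqrt_sq hSnn, ← hSdef, sub_self, zero_div]
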